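/- Let p be a prime and let n ≥ 1 and 0 ≤ j ≤ n be integers. Then the number of symmetric n×n matrices over ℤ/pℤ of rank j equals p^{⌊j/2⌋(⌊j/2⌋+1)} · g_p(n,j) · ∏_{α=1, α odd}^{j} (p^α − 1). -/

import Mathlib

open Matrix

noncomputable section

/-- `g_p(n,i) = ∏_{a=1}^{i} (p^{n−a+1}−1)/(p^a−1)` for `1 ≤ i ≤ n`, `1` for `i = 0`,
and `0` otherwise. -/
def gaussCoeff (p n i : ℕ) : ℚ :=
  if i = 0 then 1
  else if 1 ≤ i ∧ i ≤ n then
    ∏ a ∈ Finset.Icc 1 i, ((p : ℚ) ^ (n - a + 1) - 1) / ((p : ℚ) ^ a - 1)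
  else 0

namespace St7
open Matrix LinearMap Finset Module

open Finset
variable (q : ℚ)
def Qp (r : ℕ) : ℚ := ∏ i ∈ range r, (q ^ (i+1) - 1)
def Np (m r : ℕ) : ℚ := ∏ i ∈ range r, (q ^ (m - i) - 1)
def gau (m r : ℕ) : ℚ := Np q m r / Qp q r
variable {q}
lemma Np_succ (m r : ℕ) : Np q m (r+1) = Np q m r * (q ^ (m-r) - 1) := prod_range_succ _ _
lemma Qp_succ (r : ℕ) : Qp q (r+1) = Qp q r * (q ^ (r+1) - 1) := prod_range_succ _ _
lemma Qp_ne_zero (hq : 1 < q) (r : ℕ) : Qp q r ≠ 0 := by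
  refine prod_ne_zero_iff.2 fun i _ => ?_
  have : 1 < q ^ (i+1) := one_lt_pow₀ hq (by omega)
  intro h; rw [sub_eq_zero] at h; simp [← h] at this
lemma Np_eq_zero (m r : ℕ) (h : m < r) : Np q m r = 0 := by
  refine prod_eq_zero (i := m) (mem_range.2 h) ?_; simp
lemma gau_eq_zero (m r : ℕ) (h : m < r) : gau q m r = 0 := by
  rw [gau, Np_eq_zero m r h, zero_div]

lemma gau_zero (m : ℕ) : gau q m 0 = 1 := by simp [gau, Np, Qp]

lemma Np_key (m r : ℕ) : q^(r+1) * Np q m (r+1) = (q^(m+1) - q^(r+1)) * Np q m r := by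
  rcases le_or_gt r m with h | h
  · rw [Np_succ]
    have e : q ^ (r+1) * q ^ (m - r) = q ^ (m+1) := by rw [← pow_add]; congr 1; omega
    linear_combination (Np q m r) * e
  · rw [Np_eq_zero m r h, Np_eq_zero m (r+1) (by omega), mul_zero, mul_zero]
lemma Np_succ_m (m r : ℕ) : Np q (m+1) (r+1) = (q^(m+1) - 1) * Np q m r := by
  rw [Np, prod_range_succ', Np, Nat.sub_zero, mul_comm]
  congr 1
  exact prod_congr rfl fun i _ => by congr 2; omega
lemma pascal1 (hq : 1 < q) (m r : ℕ) :
    gau q (m+1) (r+1) = gau q m r + q^(r+1) * gau q m (r+1) := by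
  have h1 := Qp_ne_zero hq r
  have h2 : q ^ (r+1) - 1 ≠ 0 := by
    have : 1 < q ^ (r+1) := one_lt_pow₀ hq (by omega)
    intro h; rw [sub_eq_zero] at h; simp [← h] at this
  have central : (q^(m+1)-1) * Np q m r
      = Np q m r * (q^(r+1)-1) + q^(r+1) * Np q m (r+1) := by
    linear_combination -(Np_key m r)
  have hc : Np q m r / Qp q r = Np q m r * (q^(r+1)-1) / (Qp q r * (q^(r+1)-1)) := by
    field_simp
  rw [gau, gau, gau, Qp_succ, Np_succ_m, hc, ← mul_div_assoc, ← add_div, central]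
lemma pascal2 (hq : 1 < q) (m r : ℕ) :
    gau q (m+1) (r+1) = q^(m-r) * gau q m r + gau q m (r+1) := by
  rcases lt_or_ge m r with h | h
  · rw [gau, gau, gau, Np_eq_zero m r h, Np_eq_zero m (r+1) (by omega),
      Np_eq_zero (m+1) (r+1) (by omega)]
    simp
  · have h1 := Qp_ne_zero hq r
    have h2 : q ^ (r+1) - 1 ≠ 0 := by
      have : 1 < q ^ (r+1) := one_lt_pow₀ hq (by omega)
      intro h; rw [sub_eq_zero] at h; simp [← h] at this
    have e : q ^ (m-r) * q ^ (r+1) = q ^ (m+1) := by rw [← pow_add]; congr 1; omega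
    have central : (q^(m+1)-1) * Np q m r
        = q^(m-r) * (q^(r+1)-1) * Np q m r + Np q m (r+1) := by
      rw [Np_succ]
      linear_combination -(Np q m r) * e
    have hc : q^(m-r) * (Np q m r / Qp q r)
        = q^(m-r) * (q^(r+1)-1) * Np q m r / (Qp q r * (q^(r+1)-1)) := by
      field_simp
    rw [gau, gau, gau, Qp_succ, Np_succ_m, hc, ← add_div, central]

variable (q) in
def cc : ℕ → ℚ
  | 0 => 1
  | (r+1) => cc r * (if Even r then q^(r+1) - 1 else q^(r+1))

variable (q) in
def TT (k : ℕ) : ℚ := ∑ r ∈ range (k+1), gau q k r * cc q r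
variable (q) in
def WW (k : ℕ) : ℚ := ∑ s ∈ range (k+1), gau q k s * q^(k-s) * cc q (s+1)
variable (q) in
def EE (k : ℕ) : ℚ :=
  ∑ s ∈ range (k+1), if Even s then gau q k s * q^(k-s) * cc q s else 0

lemma cc_zero : cc q 0 = 1 := rfl
lemma cc_succ (r : ℕ) :
    cc q (r+1) = cc q r * (if Even r then q^(r+1) - 1 else q^(r+1)) := rfl

/-- F1 -/
lemma TT_succ (hq : 1 < q) (k : ℕ) : TT q (k+1) = TT q k + WW q k := by
  rw [TT, sum_range_succ']
  simp only [pascal2 hq, gau_zero, cc_zero, mul_one]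
  rw [Finset.sum_congr rfl (fun t _ => by ring :
    ∀ t ∈ Finset.range (k+1), (q ^ (k - t) * gau q k t + gau q k (t+1)) * cc q (t+1)
      = gau q k t * q^(k-t) * cc q (t+1) + gau q k (t+1) * cc q (t+1))]
  rw [sum_add_distrib]
  have h2 : ∑ t ∈ range (k+1), gau q k (t+1) * cc q (t+1) = TT q k - 1 := by
    have := sum_range_succ' (fun r => gau q k r * cc q r) (k+1)
    rw [TT, sum_range_succ _ (k+1)] at *
    rw [gau_eq_zero k (k+1) (by omega)] at this
    simp only [gau_zero, cc_zero, mul_one, zero_mul, add_zero] at this ⊢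
    linarith [this]
  rw [h2, ← WW]
  ring

/-- F2 -/
lemma WW_eq (hq : 1 < q) (k : ℕ) : WW q k = q^(k+1) * TT q k - EE q k := by
  rw [WW, TT, EE, mul_sum, ← sum_sub_distrib]
  refine sum_congr rfl fun s hs => ?_
  have hsk : s ≤ k := by simpa using Nat.lt_succ_iff.mp (mem_range.mp hs)
  have epow : q^(k-s) * q^(s+1) = q^(k+1) := by rw [← pow_add]; congr 1; omega
  by_cases h : Even s
  · rw [cc_succ, if_pos h, if_pos h]
    linear_combination gau q k s * cc q s * epow
  · rw [cc_succ, if_neg h, if_neg h]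
    linear_combination gau q k s * cc q s * epow

/-- F3 -/
lemma EE_succ (hq : 1 < q) (k : ℕ) : EE q (k+1) = q^(k+1) * TT q k := by
  rw [EE, sum_range_succ']
  simp only [Nat.even_add_one, gau_zero, cc_zero, Nat.sub_zero, Even.zero, if_pos, mul_one, one_mul]
  have step : ∀ t ∈ Finset.range (k+1),
      (if ¬ Even t then gau q (k+1) (t+1) * q^(k+1-(t+1)) * cc q (t+1) else 0)
      = q^(k+1) * ((if ¬ Even t then gau q k t * cc q t else 0)
          + (if ¬ Even t then gau q k (t+1) * cc q (t+1) else 0)) := by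
    intro t ht
    have htk : t ≤ k := by simpa using Nat.lt_succ_iff.mp (mem_range.mp ht)
    by_cases h : Even t
    · simp [h]
    · simp only [h, not_false_iff, if_true, if_neg]
      have hcc : cc q (t+1) = cc q t * q^(t+1) := by rw [cc_succ, if_neg h]
      have e1 : q^(k+1-(t+1)) = q^(k-t) := by congr 1; omega
      have e2 : q^(k-t) * q^(t+1) = q^(k+1) := by rw [← pow_add]; congr 1; omega
      rw [pascal1 hq, e1]
      linear_combination (gau q k t * cc q t + gau q k (t+1) * cc q (t+1)) * e2
          + gau q k t * q^(k-t) * hcc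
  rw [sum_congr rfl step, ← mul_sum, sum_add_distrib]
  have hY : ∑ t ∈ range (k+1), (if ¬ Even t then gau q k (t+1) * cc q (t+1) else 0)
      = (∑ t ∈ range (k+1), (if Even t then gau q k t * cc q t else 0)) - 1 := by
    have h1 := sum_range_succ' (fun s => if Even s then gau q k s * cc q s else 0) (k+1)
    have h2 := sum_range_succ (fun s => if Even s then gau q k s * cc q s else 0) (k+1)
    rw [h2] at h1
    simp only [Nat.even_add_one, gau_eq_zero k (k+1) (by omega : k < k+1), zero_mul,
      ite_self, add_zero, gau_zero, cc_zero, mul_one, one_mul, Even.zero, if_true] at h1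
    linarith [h1]
  rw [hY]
  have hX : (∑ t ∈ range (k+1), (if ¬ Even t then gau q k t * cc q t else 0))
      + (∑ t ∈ range (k+1), (if Even t then gau q k t * cc q t else 0)) = TT q k := by
    rw [TT, ← sum_add_distrib]
    refine sum_congr rfl fun t _ => ?_
    by_cases h : Even t <;> simp [h]
  linear_combination q^(k+1) * hX



lemma TT_zero : TT q 0 = 1 := by
  simp [TT, Finset.sum_range_one, gau_zero, cc_zero]

lemma EE_zero : EE q 0 = 1 := by
  simp [EE, Finset.sum_range_one, gau_zero, cc_zero]

lemma exp_step (k : ℕ) : (k+1)*(k+2)/2 = (k+1) + k*(k+1)/2 := by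
  have h2 : (k+1)*(k+2) = k*(k+1) + 2*(k+1) := by ring
  rw [h2, Nat.add_mul_div_left _ _ (by norm_num : 0 < 2)]
  omega

lemma TT_eq (hq : 1 < q) : ∀ k, TT q k = q ^ (k*(k+1)/2) := by
  intro k
  induction k using Nat.strong_induction_on with
  | _ k ih =>
    match k with
    | 0 => simpa using TT_zero (q := q)
    | 1 =>
      have h1 := TT_succ hq 0
      rw [WW_eq hq 0, EE_zero, TT_zero] at h1
      rw [h1]; norm_num
    | (k+2) =>
      have ih0 : TT q k = q ^ (k*(k+1)/2) := ih k (by omega)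
      have ih1 : TT q (k+1) = q ^ ((k+1)*(k+2)/2) := ih (k+1) (by omega)
      have h1 := TT_succ hq (k+1)
      rw [WW_eq hq (k+1), EE_succ hq k, ih0, ih1] at h1
      rw [h1]
      have e1 : (k+1) + k*(k+1)/2 = (k+1)*(k+2)/2 := (exp_step k).symm
      have e2 : (k+2) + (k+1)*(k+2)/2 = (k+2)*(k+3)/2 := (exp_step (k+1)).symm
      rw [← pow_add, ← pow_add, e1, e2]
      ring



lemma exp_step' (k : ℕ) : (k+1)*(k+2)/2 = (k+1) + k*(k+1)/2 := by
  have h2 : (k+1)*(k+2) = k*(k+1) + 2*(k+1) := by ring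
  rw [h2, Nat.add_mul_div_left _ _ (by norm_num : 0 < 2)]
  omega

variable {F : Type*} [Field F] [Fintype F] {m : ℕ}

/-- symmetric matrices are determined by the upper triangle -/
def symEquiv (F : Type*) (m : ℕ) :
    {x : Matrix (Fin m) (Fin m) F // x.IsSymm} ≃ ({q : Fin m × Fin m // q.1 ≤ q.2} → F) where
  toFun x q := x.1 q.1.1 q.1.2
  invFun g := ⟨Matrix.of fun i j =>
      if h : i ≤ j then g ⟨(i,j), h⟩ else g ⟨(j,i), le_of_not_ge h⟩, by
    ext i j
    simp only [Matrix.transpose_apply, Matrix.of_apply]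
    split_ifs with h1 h2 h2
    · obtain rfl : i = j := le_antisymm h2 h1
      rfl
    · rfl
    · rfl
    · exact absurd (le_of_not_ge h1) h2⟩
  left_inv x := by
    apply Subtype.ext
    ext i j
    simp only [Matrix.of_apply]
    split_ifs with h
    · rfl
    · have := congr_fun (congr_fun x.2 i) j
      simpa [Matrix.transpose_apply] using this
  right_inv g := by
    funext q
    simp only [Matrix.of_apply]
    rw [dif_pos q.2]

def triEquiv (m : ℕ) : {q : Fin m × Fin m // q.1 ≤ q.2} ≃ (Σ j : Fin m, Fin (j.1+1)) where
  toFun q := ⟨q.1.2, ⟨q.1.1.1, by omega⟩⟩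
  invFun s := ⟨(⟨s.2.1, by omega⟩, s.1), by
    show (⟨s.2.1, _⟩ : Fin m) ≤ s.1
    have := s.2.2; exact Fin.mk_le_of_le_val (by omega)⟩
  left_inv q := rfl
  right_inv s := rfl

lemma card_tri (m : ℕ) : Nat.card {q : Fin m × Fin m // q.1 ≤ q.2} = m*(m+1)/2 := by
  rw [Nat.card_congr (triEquiv m), Nat.card_eq_fintype_card, Fintype.card_sigma]
  simp only [Fintype.card_fin]
  rw [Fin.sum_univ_eq_sum_range (fun j => j + 1) m]
  induction m with
  | zero => simp
  | succ k ih =>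
      rw [sum_range_succ, ih, exp_step']
      ring

lemma card_sym (F : Type*) [Field F] [Fintype F] (m : ℕ) :
    Nat.card {x : Matrix (Fin m) (Fin m) F // x.IsSymm}
      = Fintype.card F ^ (m*(m+1)/2) := by
  rw [Nat.card_congr (symEquiv F m), Nat.card_eq_fintype_card, Fintype.card_fun,
    ← Nat.card_eq_fintype_card (α := {q : Fin m × Fin m // q.1 ≤ q.2}), card_tri]



lemma card_fiber_sum {α ι : Type*} [Finite α] [Fintype ι] (g : α → ι) :
    Nat.card α = ∑ i : ι, Nat.card {x : α // g x = i} := by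
  classical
  cases nonempty_fintype α
  simp_rw [Nat.card_eq_fintype_card]
  rw [← Fintype.card_congr (Equiv.sigmaFiberEquiv g), Fintype.card_sigma]

variable {F : Type*} [Field F] [Fintype F] {m k : ℕ}

instance : Finite (Submodule F (Fin m → F)) :=
  Finite.of_injective (fun W => (W : Set (Fin m → F))) SetLike.coe_injective

/-- fibers of span map: independent tuples with span W ≃ independent tuples in W -/
def fiberEquiv (W : Submodule F (Fin m → F)) (hW : finrank F W = k) :
    {v : {v : Fin k → (Fin m → F) // LinearIndependent F v} //
        Submodule.span F (Set.range v.1) = W}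
      ≃ {w : Fin k → W // LinearIndependent F w} where
  toFun v := ⟨fun i => ⟨v.1.1 i,
      (le_of_eq v.2) (Submodule.subset_span (Set.mem_range_self i))⟩, by
    apply LinearIndependent.of_comp W.subtype
    exact v.1.2⟩
  invFun w := ⟨⟨fun i => (w.1 i : Fin m → F),
      w.2.map' W.subtype (Submodule.ker_subtype W)⟩, by
    have htop : Submodule.span F (Set.range w.1) = ⊤ := by
      apply Submodule.eq_top_of_finrank_eq
      rw [finrank_span_eq_card w.2, Fintype.card_fin, hW]
    have h2 : Set.range (fun i => (w.1 i : Fin m → F)) = W.subtype '' Set.range w.1 := by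
      rw [← Set.range_comp]; rfl
    rw [h2, Submodule.span_image, htop, Submodule.map_top, Submodule.range_subtype]⟩
  left_inv v := by apply Subtype.ext; apply Subtype.ext; rfl
  right_inv w := by apply Subtype.ext; funext i; apply Subtype.ext; rfl



variable {F : Type*} [Field F] [Fintype F] {m k : ℕ}

lemma card_li (hk : k ≤ m) :
    Nat.card {v : Fin k → (Fin m → F) // LinearIndependent F v}
      = ∏ i ∈ range k, (Fintype.card F ^ m - Fintype.card F ^ i) := by
  rw [card_linearIndependent (by
    simpa [Module.finrank_fintype_fun_eq_card] using hk)]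
  simp only [Module.finrank_fintype_fun_eq_card, Fintype.card_fin]
  exact Fin.prod_univ_eq_prod_range (fun i => Fintype.card F ^ m - Fintype.card F ^ i) k

lemma card_li_sub (W : Submodule F (Fin m → F)) (hW : finrank F W = k) :
    Nat.card {w : Fin k → W // LinearIndependent F w}
      = ∏ i ∈ range k, (Fintype.card F ^ k - Fintype.card F ^ i) := by
  rw [card_linearIndependent (by rw [hW])]
  simp only [hW, Fintype.card_fin]
  exact Fin.prod_univ_eq_prod_range (fun i => Fintype.card F ^ k - Fintype.card F ^ i) k

lemma card_subspaces_mul (F : Type*) [Field F] [Fintype F] {m k : ℕ} (hk : k ≤ m) :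
    Nat.card {W : Submodule F (Fin m → F) // finrank F W = k}
        * ∏ i ∈ range k, (Fintype.card F ^ k - Fintype.card F ^ i)
      = ∏ i ∈ range k, (Fintype.card F ^ m - Fintype.card F ^ i) := by
  classical
  haveI : Fintype {W : Submodule F (Fin m → F) // finrank F W = k} := Fintype.ofFinite _
  have h2 := card_fiber_sum (g := fun v : {v : Fin k → (Fin m → F) // LinearIndependent F v} =>
      (⟨Submodule.span F (Set.range v.1), by rw [finrank_span_eq_card v.2, Fintype.card_fin]⟩ :
        {W : Submodule F (Fin m → F) // finrank F W = k}))
  rw [card_li hk] at h2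
  rw [h2, Finset.sum_congr rfl (fun i _ => ?_), Finset.sum_const, Finset.card_univ,
    smul_eq_mul, Nat.card_eq_fintype_card]
  · -- fiber card
    have e1 : {x : {v : Fin k → (Fin m → F) // LinearIndependent F v} //
          (⟨Submodule.span F (Set.range x.1), by rw [finrank_span_eq_card x.2, Fintype.card_fin]⟩ :
            {W : Submodule F (Fin m → F) // finrank F W = k}) = i}
        ≃ {v : {v : Fin k → (Fin m → F) // LinearIndependent F v} //
            Submodule.span F (Set.range v.1) = i.1} :=
      Equiv.subtypeEquivRight (fun x => by rw [Subtype.ext_iff])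
    rw [Nat.card_congr e1, Nat.card_congr (fiberEquiv i.1 i.2), card_li_sub i.1 i.2]


variable {F : Type*} [Field F] [Fintype F] {m r : ℕ}

lemma card_ker_fiber (W : Submodule F (Fin m → F)) (hr : r ≤ m)
    (hW : finrank F W = m - r) :
    Nat.card {x : Matrix (Fin m) (Fin m) F // x.IsSymm ∧ ker x.mulVecLin = W}
      = Nat.card {y : Matrix (Fin r) (Fin r) F // y.IsSymm ∧ y.rank = r} := by
  classical
  obtain ⟨e⟩ : Nonempty ((((Fin m → F) ⧸ W)) ≃ₗ[F] (Fin r → F)) := by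
    apply FiniteDimensional.nonempty_linearEquiv_of_finrank_eq
    have h0 := Submodule.finrank_quotient_add_finrank W
    rw [finrank_fintype_fun_eq_card, Fintype.card_fin] at h0 ⊢
    omega
  set π : (Fin m → F) →ₗ[F] (Fin r → F) := e.toLinearMap ∘ₗ W.mkQ with hπdef
  have hπs : Function.Surjective π := by
    rw [hπdef, LinearMap.coe_comp]
    exact e.surjective.comp (Submodule.mkQ_surjective W)
  have hπk : ker π = W := by
    rw [hπdef, ker_comp, LinearEquiv.ker, Submodule.comap_bot, Submodule.ker_mkQ]
  set P : Matrix (Fin r) (Fin m) F := LinearMap.toMatrix' π with hPdef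
  have hP : P.mulVecLin = π := by
    rw [hPdef, ← Matrix.toLin'_apply', Matrix.toLin'_toMatrix']
  have mvl_inj : ∀ {a b : ℕ} (X Y : Matrix (Fin a) (Fin b) F),
      X.mulVecLin = Y.mulVecLin → X = Y := by
    intro a b X Y h
    apply Matrix.toLin'.injective
    rw [Matrix.toLin'_apply', Matrix.toLin'_apply', h]
  have hrankP : P.rank = r := by
    show finrank F (range P.mulVecLin) = r
    rw [hP, LinearMap.range_eq_top.mpr hπs, finrank_top, finrank_fintype_fun_eq_card,
      Fintype.card_fin]
  have hPt : ker (Pᵀ).mulVecLin = ⊥ := by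
    have h1 : (Pᵀ).rank = r := by rw [Matrix.rank_transpose, hrankP]
    have h2 := LinearMap.finrank_range_add_finrank_ker ((Pᵀ).mulVecLin)
    rw [finrank_fintype_fun_eq_card, Fintype.card_fin] at h2
    have h3 : finrank F (range (Pᵀ).mulVecLin) = r := h1
    have h4 : finrank F (ker (Pᵀ).mulVecLin) = 0 := by omega
    exact Submodule.finrank_eq_zero.mp h4
  have hPtinj : Function.Injective ((Pᵀ).mulVecLin) := ker_eq_bot.mp hPt
  have factor : ∀ {s : ℕ} (C : Matrix (Fin s) (Fin m) F),
      W ≤ ker C.mulVecLin → ∃ D : Matrix (Fin s) (Fin r) F, C = D * P := by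
    intro s C hle
    refine ⟨LinearMap.toMatrix' ((W.liftQ C.mulVecLin hle) ∘ₗ
      (e.symm : (Fin r → F) →ₗ[F] ((Fin m → F) ⧸ W))), ?_⟩
    apply mvl_inj
    rw [Matrix.mulVecLin_mul, hP]
    have hD : (LinearMap.toMatrix' ((W.liftQ C.mulVecLin hle) ∘ₗ
        (e.symm : (Fin r → F) →ₗ[F] ((Fin m → F) ⧸ W)))).mulVecLin
        = (W.liftQ C.mulVecLin hle) ∘ₗ (e.symm : (Fin r → F) →ₗ[F] ((Fin m → F) ⧸ W)) := by
      rw [← Matrix.toLin'_apply', Matrix.toLin'_toMatrix']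
    rw [hD, hπdef]
    refine LinearMap.ext fun x => ?_
    simp [LinearMap.comp_apply]
  have mcancel : ∀ (B B' : Matrix (Fin r) (Fin r) F),
      Pᵀ * B * P = Pᵀ * B' * P → B = B' := by
    intro B B' h
    apply mvl_inj
    have h2 := congrArg Matrix.mulVecLin h
    rw [Matrix.mulVecLin_mul, Matrix.mulVecLin_mul, Matrix.mulVecLin_mul,
      Matrix.mulVecLin_mul, hP] at h2
    exact (cancel_left hPtinj).mp ((cancel_right hπs).mp h2)
  have ker_bot_of_rank : ∀ (N : Matrix (Fin r) (Fin r) F), N.rank = r →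
      ker N.mulVecLin = ⊥ := by
    intro N hN
    have h2 := LinearMap.finrank_range_add_finrank_ker (N.mulVecLin)
    rw [finrank_fintype_fun_eq_card, Fintype.card_fin] at h2
    have h3 : finrank F (range N.mulVecLin) = r := hN
    exact Submodule.finrank_eq_zero.mp (by omega)
  -- the map
  let Φ : {y : Matrix (Fin r) (Fin r) F // y.IsSymm ∧ y.rank = r} →
      {x : Matrix (Fin m) (Fin m) F // x.IsSymm ∧ ker x.mulVecLin = W} := fun y =>
    ⟨Pᵀ * y.1 * P, by
      show (Pᵀ * y.1 * P)ᵀ = Pᵀ * y.1 * P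
      rw [Matrix.transpose_mul, Matrix.transpose_mul, Matrix.transpose_transpose,
        y.2.1, ← Matrix.mul_assoc], by
      rw [Matrix.mulVecLin_mul, Matrix.mulVecLin_mul, hP, ker_comp, ker_comp, hPt,
        Submodule.comap_bot, ker_bot_of_rank y.1 y.2.2, Submodule.comap_bot, hπk]⟩
  have hinj : Function.Injective Φ := by
    intro y y' h
    exact Subtype.ext (mcancel _ _ (congrArg Subtype.val h))
  have hsurj : Function.Surjective Φ := by
    rintro ⟨x, hsym, hker⟩
    have hle : W ≤ ker x.mulVecLin := le_of_eq hker.symm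
    obtain ⟨A, hA⟩ := factor x hle
    have hxt : x = Pᵀ * Aᵀ := by
      have h2 := congrArg Matrix.transpose hA
      rw [Matrix.transpose_mul, hsym] at h2
      exact h2
    have hle2 : W ≤ ker (Aᵀ).mulVecLin := by
      intro v hv
      have h0 : x.mulVecLin v = 0 := hle hv
      rw [hxt, Matrix.mulVecLin_mul, LinearMap.comp_apply] at h0
      have : (Aᵀ).mulVecLin v = 0 := hPtinj (by simpa using h0)
      exact this
    obtain ⟨B, hB⟩ := factor Aᵀ hle2
    have hx2 : x = Pᵀ * B * P := by rw [hxt, hB, ← Matrix.mul_assoc]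
    have hBsym : B.IsSymm := by
      show Bᵀ = B
      apply mcancel
      have h3 : (Pᵀ * B * P)ᵀ = Pᵀ * Bᵀ * P := by
        rw [Matrix.transpose_mul, Matrix.transpose_mul, Matrix.transpose_transpose,
          ← Matrix.mul_assoc]
      rw [← h3, ← hx2, hsym, hx2]
    have hkerB : ker B.mulVecLin = ⊥ := by
      have h1 : Submodule.comap π (ker B.mulVecLin) = W := by
        have h5 := hker
        rw [hx2, Matrix.mulVecLin_mul, Matrix.mulVecLin_mul, hP, ker_comp, ker_comp,
          hPt, Submodule.comap_bot] at h5
        exact h5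
      rw [Submodule.eq_bot_iff]
      intro u hu
      obtain ⟨v, hv⟩ := hπs u
      have hv2 : v ∈ Submodule.comap π (ker B.mulVecLin) := by
        rw [Submodule.mem_comap, hv]
        exact hu
      rw [h1, ← hπk, LinearMap.mem_ker] at hv2
      rw [← hv, hv2]
    have hrankB : B.rank = r := by
      have h2 := LinearMap.finrank_range_add_finrank_ker (B.mulVecLin)
      rw [hkerB, finrank_bot, finrank_fintype_fun_eq_card, Fintype.card_fin] at h2
      show finrank F (range B.mulVecLin) = r
      omega
    exact ⟨⟨B, hBsym, hrankB⟩, Subtype.ext hx2.symm⟩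
  exact (Nat.card_congr (Equiv.ofBijective Φ ⟨hinj, hsurj⟩)).symm




variable {F : Type*} [Field F] [Fintype F] {m r : ℕ}

instance inst1 : Finite (Submodule F (Fin m → F)) :=
  Finite.of_injective (fun W => (W : Set (Fin m → F))) SetLike.coe_injective

lemma card_sym_rank (hr : r ≤ m) :
    Nat.card {x : Matrix (Fin m) (Fin m) F // x.IsSymm ∧ x.rank = r}
      = Nat.card {W : Submodule F (Fin m → F) // finrank F W = m - r}
        * Nat.card {y : Matrix (Fin r) (Fin r) F // y.IsSymm ∧ y.rank = r} := by
  classical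
  haveI : Fintype {W : Submodule F (Fin m → F) // finrank F W = m - r} := Fintype.ofFinite _
  have key : ∀ x : {x : Matrix (Fin m) (Fin m) F // x.IsSymm ∧ x.rank = r},
      finrank F (ker x.1.mulVecLin) = m - r := by
    intro x
    have h2 := LinearMap.finrank_range_add_finrank_ker (x.1.mulVecLin)
    rw [finrank_fintype_fun_eq_card, Fintype.card_fin] at h2
    have h3 : finrank F (range x.1.mulVecLin) = r := x.2.2
    omega
  rw [card_fiber_sum (g := fun x : {x : Matrix (Fin m) (Fin m) F // x.IsSymm ∧ x.rank = r} =>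
    (⟨ker x.1.mulVecLin, key x⟩ : {W : Submodule F (Fin m → F) // finrank F W = m - r}))]
  rw [Finset.sum_congr rfl (fun W _ => ?_), Finset.sum_const, Finset.card_univ,
    smul_eq_mul, Nat.card_eq_fintype_card]
  have e1 : {x : {x : Matrix (Fin m) (Fin m) F // x.IsSymm ∧ x.rank = r} //
        (⟨ker x.1.mulVecLin, key x⟩ : {W : Submodule F (Fin m → F) // finrank F W = m - r}) = W}
      ≃ {x : Matrix (Fin m) (Fin m) F // (x.IsSymm ∧ x.rank = r) ∧ ker x.mulVecLin = W.1} :=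
    (Equiv.subtypeEquivRight (fun x => by rw [Subtype.ext_iff])).trans
      (Equiv.subtypeSubtypeEquivSubtypeInter _ _)
  have e2 : {x : Matrix (Fin m) (Fin m) F // (x.IsSymm ∧ x.rank = r) ∧ ker x.mulVecLin = W.1}
      ≃ {x : Matrix (Fin m) (Fin m) F // x.IsSymm ∧ ker x.mulVecLin = W.1} := by
    refine Equiv.subtypeEquivRight (fun x => ?_)
    constructor
    · rintro ⟨⟨h1, h2⟩, h3⟩; exact ⟨h1, h3⟩
    · rintro ⟨h1, h3⟩
      refine ⟨⟨h1, ?_⟩, h3⟩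
      have h2 := LinearMap.finrank_range_add_finrank_ker (x.mulVecLin)
      rw [finrank_fintype_fun_eq_card, Fintype.card_fin, h3, W.2] at h2
      show finrank F (range x.mulVecLin) = r
      omega
  rw [Nat.card_congr (e1.trans e2), card_ker_fiber W.1 hr W.2]

lemma card_sym_partition (F : Type*) [Field F] [Fintype F] (m : ℕ) :
    Fintype.card F ^ (m*(m+1)/2)
      = ∑ r ∈ range (m+1), Nat.card {x : Matrix (Fin m) (Fin m) F // x.IsSymm ∧ x.rank = r} := by
  classical
  rw [← card_sym F m]
  have key : ∀ x : {x : Matrix (Fin m) (Fin m) F // x.IsSymm}, x.1.rank < m + 1 := by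
    intro x
    have := Matrix.rank_le_card_width x.1
    simp only [Fintype.card_fin] at this
    omega
  rw [card_fiber_sum (g := fun x : {x : Matrix (Fin m) (Fin m) F // x.IsSymm} =>
    (⟨x.1.rank, key x⟩ : Fin (m+1)))]
  rw [← Fin.sum_univ_eq_sum_range (fun r => Nat.card
    {x : Matrix (Fin m) (Fin m) F // x.IsSymm ∧ x.rank = r}) (m+1)]
  refine Finset.sum_congr rfl (fun i _ => ?_)
  have e1 : {x : {x : Matrix (Fin m) (Fin m) F // x.IsSymm} //
        (⟨x.1.rank, key x⟩ : Fin (m+1)) = i}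
      ≃ {x : Matrix (Fin m) (Fin m) F // x.IsSymm ∧ x.rank = i.1} :=
    (Equiv.subtypeEquivRight (fun x => by rw [Fin.ext_iff])).trans
      (Equiv.subtypeSubtypeEquivSubtypeInter _ _)
  rw [Nat.card_congr e1]


section MoreAlg
variable {q : ℚ}

lemma Np_kk (k : ℕ) : Np q k k = Qp q k := by
  rw [Np, Qp, ← Finset.prod_range_reflect (fun j => q^(j+1) - 1) k]
  refine Finset.prod_congr rfl fun j hj => ?_
  rw [Finset.mem_range] at hj
  congr 2
  omega

lemma gau_mm (hq : 1 < q) (m : ℕ) : gau q m m = 1 := by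
  rw [gau, Np_kk, div_self (Qp_ne_zero hq m)]

lemma Np_mul_Qp {m : ℕ} : ∀ {k : ℕ}, k ≤ m → Np q m k * Qp q (m-k) = Qp q m := by
  intro k
  induction k with
  | zero => simp [Np]
  | succ n ih =>
    intro h
    have h1 : n ≤ m := by omega
    have h2 : Qp q (m-n) = Qp q (m-(n+1)) * (q^(m-n) - 1) := by
      have e : m - n = (m - (n+1)) + 1 := by omega
      rw [e, Qp_succ]
    have h3 := ih h1
    rw [h2] at h3
    rw [Np_succ]
    linear_combination h3

lemma gau_symm (hq : 1 < q) {m r : ℕ} (h : r ≤ m) : gau q m (m-r) = gau q m r := by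
  have hmr : m - (m-r) = r := by omega
  rw [gau, gau, div_eq_div_iff (Qp_ne_zero hq _) (Qp_ne_zero hq _)]
  have a1 := Np_mul_Qp (q := q) (m := m) h
  have a2 := Np_mul_Qp (q := q) (m := m) (Nat.sub_le m r)
  rw [hmr] at a2
  linear_combination a2 - a1

lemma exp_step2 (k : ℕ) : (k+1)*k/2 = k + k*(k-1)/2 := by
  cases k with
  | zero => rfl
  | succ t =>
    have h1 : (t+1+1)*(t+1) = (t+1)*(t+2) := by ring
    have h2 : (t+1)*(t+1-1) = t*(t+1) := by rw [Nat.succ_sub_one]; ring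
    rw [h1, h2, exp_step']

lemma prod_q_sub (hq : 1 < q) : ∀ {k m : ℕ}, k ≤ m →
    ∏ i ∈ range k, (q^m - q^i) = q^(k*(k-1)/2) * Np q m k := by
  intro k
  induction k with
  | zero => intro m _; simp [Np]
  | succ n ih =>
    intro m h
    rw [prod_range_succ, ih (by omega), Np_succ]
    simp only [Nat.add_sub_cancel]
    have e1 : q^n * q^(m-n) = q^m := by rw [← pow_add]; congr 1; omega
    have e3 : q^((n+1)*n/2) = q^(n*(n-1)/2) * q^n := by
      rw [← pow_add]
      congr 1
      rw [exp_step2]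
      exact Nat.add_comm _ _
    rw [e3]
    linear_combination -(q^(n*(n-1)/2) * Np q m n) * e1

lemma Icc_prod_shift (f : ℕ → ℚ) (j : ℕ) :
    ∏ a ∈ Finset.Icc 1 j, f a = ∏ i ∈ range j, f (i+1) := by
  induction j with
  | zero => simp
  | succ n ih => rw [Finset.prod_Icc_succ_top (by omega), ih, prod_range_succ]

lemma cc_closed (j : ℕ) :
    cc q j = q^((j/2)*(j/2+1)) * ∏ a ∈ (Finset.Icc 1 j).filter (fun a => Odd a), (q^a - 1) := by
  induction j with
  | zero => simp [cc_zero]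
  | succ n ih =>
    have hIcc : Finset.Icc 1 (n+1) = insert (n+1) (Finset.Icc 1 n) := by
      ext x
      simp only [Finset.mem_Icc, Finset.mem_insert]
      omega
    rw [cc_succ, ih, hIcc, Finset.filter_insert]
    by_cases h : Even n
    · rw [if_pos h, if_pos (Nat.odd_add_one.mpr (Nat.not_odd_iff_even.mpr h))]
      rw [Finset.prod_insert (by
        intro hmem
        simp only [Finset.mem_filter, Finset.mem_Icc] at hmem
        omega)]
      obtain ⟨t, rfl⟩ := h
      have e1 : (t+t+1)/2 = (t+t)/2 := by omega
      rw [e1]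
      ring
    · rw [if_neg h, if_neg (Nat.not_odd_iff_even.mpr (Nat.even_add_one.mpr h))]
      obtain ⟨t, rfl⟩ := Nat.not_even_iff_odd.mp h
      have e1 : (2*t+1+1)/2 = t+1 := by omega
      have e2 : (2*t+1)/2 = t := by omega
      rw [e1, e2]
      have e3 : (t+1)*(t+1+1) = t*(t+1) + (2*t+1+1) := by ring
      rw [e3, pow_add]
      ring

end MoreAlg


lemma gau_eq_gaussCoeff {p n j : ℕ} (hp : 2 ≤ p) (hj : j ≤ n) :
    gau (p : ℚ) n j = gaussCoeff p n j := by
  rcases Nat.eq_zero_or_pos j with rfl | hj1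
  · rw [gau_zero, gaussCoeff]; simp
  · rw [gaussCoeff, if_neg (by omega), if_pos ⟨hj1, hj⟩, Finset.prod_div_distrib, gau]
    congr 1
    · rw [Icc_prod_shift (fun a => (p:ℚ)^(n-a+1) - 1) j, Np]
      refine Finset.prod_congr rfl fun i hi => ?_
      rw [Finset.mem_range] at hi
      congr 2
      omega
    · rw [Icc_prod_shift (fun a => (p:ℚ)^a - 1) j, Qp]

section Assembly
variable (F : Type*) [Field F] [Fintype F]

lemma one_lt_qF : (1:ℚ) < (Fintype.card F : ℚ) := by
  have := Fintype.one_lt_card (α := F)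
  exact_mod_cast this

lemma cast_prod_sub {a k : ℕ} (h : k ≤ a) :
    ((∏ i ∈ range k, (Fintype.card F ^ a - Fintype.card F ^ i) : ℕ) : ℚ)
      = ∏ i ∈ range k, ((Fintype.card F : ℚ)^a - (Fintype.card F : ℚ)^i) := by
  rw [Nat.cast_prod]
  refine Finset.prod_congr rfl fun i hi => ?_
  rw [Finset.mem_range] at hi
  have h1 : Fintype.card F ^ i ≤ Fintype.card F ^ a :=
    Nat.pow_le_pow_right Fintype.card_pos (by omega)
  rw [Nat.cast_sub h1, Nat.cast_pow, Nat.cast_pow]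

lemma subcount_eq {m k : ℕ} (h : k ≤ m) :
    ((Nat.card {W : Submodule F (Fin m → F) // finrank F W = k}) : ℚ)
      = gau (Fintype.card F : ℚ) m k := by
  have hq := one_lt_qF F
  have h3 := card_subspaces_mul F (m := m) (k := k) h
  have h4 := congrArg (fun x : ℕ => (x : ℚ)) h3
  simp only [Nat.cast_mul] at h4
  rw [cast_prod_sub F (le_refl k), cast_prod_sub F h] at h4
  rw [prod_q_sub hq h, prod_q_sub hq (le_refl k), Np_kk] at h4
  have hE : (Fintype.card F : ℚ)^(k*(k-1)/2) ≠ 0 := pow_ne_zero _ (by linarith)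
  have hQ := Qp_ne_zero hq k
  rw [gau, eq_div_iff hQ]
  apply mul_right_cancel₀ hE
  linear_combination h4

lemma master (m : ℕ) :
    ((Fintype.card F : ℚ))^(m*(m+1)/2)
      = ∑ r ∈ range (m+1), gau (Fintype.card F : ℚ) m r
          * (Nat.card {y : Matrix (Fin r) (Fin r) F // y.IsSymm ∧ y.rank = r} : ℚ) := by
  have h := card_sym_partition F m
  have h2 := congrArg (fun x : ℕ => (x:ℚ)) h
  push_cast at h2
  rw [h2]
  refine Finset.sum_congr rfl fun r hr => ?_
  rw [Finset.mem_range] at hr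
  have hrm : r ≤ m := by omega
  rw [card_sym_rank hrm]
  push_cast
  rw [subcount_eq F (Nat.sub_le m r), gau_symm (one_lt_qF F) hrm]

lemma ZZ_eq_cc : ∀ r : ℕ,
    ((Nat.card {y : Matrix (Fin r) (Fin r) F // y.IsSymm ∧ y.rank = r}) : ℚ)
      = cc (Fintype.card F : ℚ) r := by
  intro r
  induction r using Nat.strong_induction_on with
  | _ r ih =>
    have hq := one_lt_qF F
    have h1 := master F r
    have h2 := TT_eq hq r
    rw [TT] at h2
    have h3 := h2.trans h1
    rw [sum_range_succ, sum_range_succ] at h3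
    have h4 : ∑ s ∈ range r, gau (Fintype.card F : ℚ) r s
          * (Nat.card {y : Matrix (Fin s) (Fin s) F // y.IsSymm ∧ y.rank = s} : ℚ)
        = ∑ s ∈ range r, gau (Fintype.card F : ℚ) r s * cc (Fintype.card F : ℚ) s :=
      Finset.sum_congr rfl (fun s hs => by rw [ih s (Finset.mem_range.mp hs)])
    rw [h4, gau_mm hq] at h3
    linarith

end Assembly


end St7

/-- for a prime `p`, `n ≥ 1` and `0 ≤ j ≤ n`, the number of symmetric
`n × n` matrices over `ℤ/pℤ` of rank `j` equals
`p^{⌊j/2⌋(⌊j/2⌋+1)} · g_p(n,j) · ∏_{α=1, α odd}^{j} (p^α − 1)`. -/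
theorem statement7 (p n j : ℕ) (hp : p.Prime) (hn : 1 ≤ n) (hj : j ≤ n) :
    (Nat.card ↥{x : Matrix (Fin n) (Fin n) (ZMod p) | x.IsSymm ∧ x.rank = j} : ℚ)
      = (p : ℚ) ^ ((j / 2) * (j / 2 + 1)) * gaussCoeff p n j
          * ∏ a ∈ (Finset.Icc 1 j).filter (fun a => Odd a), ((p : ℚ) ^ a - 1) := by
  haveI : Fact p.Prime := ⟨hp⟩
  haveI : NeZero p := ⟨hp.ne_zero⟩
  have hcard : Fintype.card (ZMod p) = p := ZMod.card p
  have h0 : (Nat.card ↥{x : Matrix (Fin n) (Fin n) (ZMod p) | x.IsSymm ∧ x.rank = j} : ℚ)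
      = ((Nat.card {x : Matrix (Fin n) (Fin n) (ZMod p) // x.IsSymm ∧ x.rank = j} : ℕ) : ℚ) := rfl
  rw [h0, St7.card_sym_rank hj]
  push_cast
  rw [St7.subcount_eq _ (Nat.sub_le n j), St7.ZZ_eq_cc, hcard,
    St7.gau_symm (by exact_mod_cast hp.one_lt) hj,
    St7.gau_eq_gaussCoeff hp.two_le hj, St7.cc_closed]
  ring

end
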